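/- arXiv:2202.11293 — 2 statements merged into one kernel-verified Lean document; each statement's English description precedes it below -/
import Mathlib

section
/- If t is a Liouville number, then (1/2)·(t + 1/t) is a Liouville number. -/
theorem liouville_half_add_inv (t : ℝ) (h : Liouville t) :
    Liouville ((1 / 2) * (t + 1 / t)) := by
  have hirr : Irrational t := h.irrational
  have ht0 : t ≠ 0 := by
    have := hirr.ne_int 0
    simpa using this
  have htabs : (0:ℝ) < |t| := abs_pos.mpr ht0
  intro n
  set C : ℝ := 1 + 2 / t ^ 2 with hCdef
  have hC0 : 0 < C := by positivity
  set B : ℝ := 3 * |t| with hBdef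
  have hB0 : 0 < B := by positivity
  obtain ⟨k, hk⟩ := pow_unbounded_of_one_lt (C * B ^ n) (one_lt_two (α := ℝ))
  obtain ⟨j, hj⟩ := pow_unbounded_of_one_lt (2 / |t|) (one_lt_two (α := ℝ))
  obtain ⟨p, q, hq1, hne, hlt⟩ := h (2 * n + k + j)
  have hq0 : (0:ℝ) < q := by exact_mod_cast hq1.trans_le' zero_le_one
  have hq2 : (2:ℝ) ≤ q := by exact_mod_cast hq1
  have hqR1 : (1:ℝ) ≤ q := by linarith
  set s : ℝ := (p : ℝ) / q with hsdef
  set m : ℕ := 2 * n + k + j with hmdef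
  -- |t - s| < 1/q^m ≤ 1/q^j ≤ 1/2^j < |t|/2
  have hqm0 : (0:ℝ) < (q:ℝ) ^ m := by positivity
  have h2j : (2:ℝ) ^ j ≤ (q:ℝ) ^ m := by
    calc (2:ℝ) ^ j ≤ (q:ℝ) ^ j := by gcongr
    _ ≤ (q:ℝ) ^ m := pow_le_pow_right₀ hqR1 (by rw [hmdef]; omega)
  have hsmall : |t - s| < |t| / 2 := by
    have h1 : (1:ℝ) / q ^ m ≤ 1 / 2 ^ j := by
      apply one_div_le_one_div_of_le (by positivity) h2j
    have h2 : (1:ℝ) / 2 ^ j < |t| / 2 := by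
      rw [div_lt_div_iff₀ (by positivity) two_pos] at *
      rw [div_lt_iff₀ htabs] at hj
      calc (1:ℝ) * 2 = 2 := by ring
      _ < |t| * 2 ^ j := by rw [mul_comm]; exact hj
    exact hlt.trans_le (h1.trans h2.le)
  have hslb : |t| / 2 ≤ |s| := by
    have := abs_sub_abs_le_abs_sub t s
    linarith [hsmall]
  have hsub : |s| ≤ B / 2 := by
    have := abs_sub_abs_le_abs_sub s t
    rw [abs_sub_comm] at hsmall
    rw [hBdef]; linarith
  have hs0 : s ≠ 0 := by
    intro h0
    rw [h0, abs_zero] at hslb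
    linarith
  have hp0 : (p:ℝ) ≠ 0 := fun h0 => hs0 (by rw [hsdef, h0, zero_div])
  have hpz : p ≠ 0 := by exact_mod_cast hp0
  -- the new approximation
  refine ⟨p.sign * (p ^ 2 + q ^ 2), 2 * |p| * q, ?_, ?_, ?_⟩
  · have : 1 ≤ |p| := Int.one_le_abs hpz
    nlinarith [hq1]
  · -- f(t) ≠ a'/b'
    have key1 : ((p.sign * (p ^ 2 + q ^ 2) : ℤ) : ℝ) / ((2 * |p| * q : ℤ) : ℝ)
        = (1/2) * (s + 1/s) := by
      rw [hsdef]
      rcases hpz.lt_or_gt with hp | hp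
      · rw [abs_of_neg hp, Int.sign_eq_neg_one_of_neg hp]
        push_cast
        field_simp
      · rw [abs_of_pos hp, Int.sign_eq_one_of_pos hp]
        push_cast
        field_simp
    rw [key1]
    intro heq
    have hts : t * s = 1 := by
      field_simp [ht0, hs0] at heq
      have hts' : (t - s) * (t * s - 1) = 0 := by linear_combination heq
      rcases mul_eq_zero.1 hts' with h3 | h3
      · exact absurd (by linarith : t = s) hne
      · linarith
    exact hirr ⟨(q : ℚ) / (p : ℚ), by
      have htq : t = (q : ℝ) / (p : ℝ) := by
        rw [hsdef] at hts
        rw [eq_div_iff hp0]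
        field_simp at hts
        linarith [hts]
      rw [htq]; push_cast; ring⟩
  · -- the bound
    have key1 : ((p.sign * (p ^ 2 + q ^ 2) : ℤ) : ℝ) / ((2 * |p| * q : ℤ) : ℝ)
        = (1/2) * (s + 1/s) := by
      rw [hsdef]
      rcases hpz.lt_or_gt with hp | hp
      · rw [abs_of_neg hp, Int.sign_eq_neg_one_of_neg hp]
        push_cast
        field_simp
      · rw [abs_of_pos hp, Int.sign_eq_one_of_pos hp]
        push_cast
        field_simp
    rw [key1]
    have hdiff : (1/2) * (t + 1/t) - (1/2) * (s + 1/s)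
        = (t - s) / 2 * (1 - 1 / (t * s)) := by
      field_simp [ht0, hs0]
      ring
    rw [hdiff]
    -- bound the second factor
    have hts_lb : t ^ 2 / 2 ≤ |t * s| := by
      rw [abs_mul]
      calc t ^ 2 / 2 = |t| * (|t| / 2) := by rw [← sq_abs] ; ring
      _ ≤ |t| * |s| := by gcongr
    have hfac : |1 - 1 / (t * s)| ≤ C := by
      have h1 : |1 / (t * s)| ≤ 2 / t ^ 2 := by
        rw [abs_div, abs_one, div_le_div_iff₀ (abs_pos.mpr (mul_ne_zero ht0 hs0)) (by positivity)]
        rw [one_mul]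
        linarith [hts_lb]
      calc |1 - 1 / (t * s)| ≤ |(1:ℝ)| + |1 / (t * s)| := abs_sub _ _
      _ ≤ 1 + 2 / t ^ 2 := by rw [abs_one]; linarith
    have hbound : |(t - s) / 2 * (1 - 1 / (t * s))| ≤ |t - s| * C := by
      rw [abs_mul, abs_div]
      calc |t - s| / |(2:ℝ)| * |1 - 1/(t*s)| ≤ |t - s| / |(2:ℝ)| * C := by
            apply mul_le_mul_of_nonneg_left hfac (by positivity)
      _ ≤ |t - s| * C := by
            rw [abs_two]
            have : |t - s| / 2 ≤ |t - s| := by linarith [abs_nonneg (t - s)]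
            exact mul_le_mul_of_nonneg_right this hC0.le
    -- now the denominator estimate
    have hpabs : |(p:ℝ)| = |s| * q := by
      rw [hsdef, abs_div, abs_of_pos hq0]
      field_simp
    have hb'le : ((2 * |p| * q : ℤ) : ℝ) ≤ B * q ^ 2 := by
      push_cast [Int.cast_abs]
      rw [hpabs]
      calc 2 * (|s| * (q:ℝ)) * q = |s| * (2 * q * q) := by ring
      _ ≤ (B / 2) * (2 * q * q) := by
            apply mul_le_mul_of_nonneg_right hsub (by positivity)
      _ = B * q ^ 2 := by ring
    have hb'0 : (0:ℝ) < ((2 * |p| * q : ℤ) : ℝ) := by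
      push_cast [Int.cast_abs]
      positivity
    have hpow : ((2 * |p| * q : ℤ) : ℝ) ^ n ≤ B ^ n * (q:ℝ) ^ (2 * n) := by
      calc ((2 * |p| * q : ℤ) : ℝ) ^ n ≤ (B * q ^ 2) ^ n := by gcongr
      _ = B ^ n * (q:ℝ) ^ (2 * n) := by rw [mul_pow, ← pow_mul, mul_comm 2 n]
    have hfin : C / (q:ℝ) ^ m ≤ 1 / ((2 * |p| * q : ℤ) : ℝ) ^ n := by
      rw [div_le_div_iff₀ hqm0 (by positivity)]
      calc C * ((2 * |p| * q : ℤ) : ℝ) ^ n ≤ C * (B ^ n * (q:ℝ) ^ (2*n)) := by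
            exact mul_le_mul_of_nonneg_left hpow hC0.le
      _ = (C * B ^ n) * (q:ℝ) ^ (2*n) := by ring
      _ ≤ (2:ℝ) ^ k * (q:ℝ) ^ (2*n) := by
            apply mul_le_mul_of_nonneg_right hk.le (by positivity)
      _ ≤ (q:ℝ) ^ k * (q:ℝ) ^ (2*n) := by gcongr
      _ ≤ ((q:ℝ) ^ k * (q:ℝ) ^ (2*n)) * (q:ℝ) ^ j :=
            le_mul_of_one_le_right (by positivity) (one_le_pow₀ hqR1)
      _ = 1 * (q:ℝ) ^ m := by rw [hmdef, one_mul]; rw [← pow_add, ← pow_add]; ring_nf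
    calc |(t - s) / 2 * (1 - 1 / (t * s))| ≤ |t - s| * C := hbound
    _ < (1 / (q:ℝ) ^ m) * C := by
          apply mul_lt_mul_of_pos_right _ hC0
          rw [hsdef] at hlt ⊢ ; exact hlt
    _ = C / (q:ℝ) ^ m := by ring
    _ ≤ 1 / ((2 * |p| * q : ℤ) : ℝ) ^ n := hfin
end

section
/- If t is a Liouville number, then (1/2)·(t − 1/t) is a Liouville number. -/
lemma irrational_half_sub_inv0 {t : ℝ} (h : Liouville t) :
    Irrational ((1 / 2) * (t - 1 / t)) := by
  have htr := h.transcendental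
  have ht0 : t ≠ 0 := fun h0 => h.irrational ⟨0, by simp [h0]⟩
  rintro ⟨r, hr⟩
  apply htr
  refine ⟨Polynomial.C (r.den : ℤ) * Polynomial.X ^ 2 - Polynomial.C (2 * r.num) * Polynomial.X
      - Polynomial.C (r.den : ℤ), ?_, ?_⟩
  · intro h0
    have h2 := congrArg (fun P => Polynomial.coeff P 2) h0
    simp only [Polynomial.coeff_sub, Polynomial.coeff_C_mul, Polynomial.coeff_X_pow,
      Polynomial.coeff_X, Polynomial.coeff_C, Polynomial.coeff_zero] at h2
    norm_num at h2
  · have hd : ((r.den : ℝ)) ≠ 0 := by positivity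
    have hr' : (r.num : ℝ) / (r.den : ℝ) = (1/2) * (t - 1/t) := by
      rw [← Rat.cast_def]; exact hr
    field_simp at hr'
    have hev : (Polynomial.aeval t) (Polynomial.C (r.den : ℤ) * Polynomial.X ^ 2
        - Polynomial.C (2 * r.num) * Polynomial.X - Polynomial.C (r.den : ℤ))
        = (r.den : ℝ) * t ^ 2 - (2 * r.num : ℝ) * t - (r.den : ℝ) := by
      simp only [map_sub, map_mul, map_pow, Polynomial.aeval_C, Polynomial.aeval_X,
        algebraMap_int_eq, eq_intCast, map_natCast, map_intCast, map_ofNat]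
    rw [hev]
    linear_combination (-1 : ℝ) * hr'

set_option maxHeartbeats 1000000 in
theorem liouville_half_sub_inv (t : ℝ) (h : Liouville t) :
    Liouville ((1 / 2) * (t - 1 / t)) := by
  have hirr : Irrational ((1/2) * (t - 1/t)) := irrational_half_sub_inv0 h
  have ht0 : t ≠ 0 := fun h0 => h.irrational ⟨0, by simp [h0]⟩
  have htpos : (0:ℝ) < |t| := abs_pos.mpr ht0
  set C : ℝ := 1 + 2 / t ^ 2 with hCdef
  clear_value C
  have hC1 : (1:ℝ) ≤ C := by
    rw [hCdef]
    have : 0 < 2 / t ^ 2 := by positivity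
    linarith
  set K : ℝ := 2 * (|t| + 1) with hKdef
  clear_value K
  have hK1 : (1:ℝ) ≤ K := by
    rw [hKdef]; nlinarith [abs_nonneg t]
  intro n
  obtain ⟨j, hj⟩ : ∃ j : ℕ, C * K ^ n < 2 ^ j :=
    pow_unbounded_of_one_lt _ one_lt_two
  obtain ⟨k, hk⟩ : ∃ k : ℕ, max 2 (2 / |t|) < 2 ^ k :=
    pow_unbounded_of_one_lt _ one_lt_two
  obtain ⟨a, b, hb, hne, hlt⟩ := h (2 * n + j + k)
  set m := 2 * n + j + k with hm
  clear_value m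
  have hbR : (2:ℝ) ≤ (b:ℝ) := by exact_mod_cast hb
  have hbpos : (0:ℝ) < (b:ℝ) := by linarith
  have hpow : (2:ℝ) ^ k ≤ (b:ℝ) ^ m := by
    calc (2:ℝ) ^ k ≤ (2:ℝ) ^ m := by
          apply pow_le_pow_right₀ one_le_two
          omega
      _ ≤ (b:ℝ) ^ m := by
          apply pow_le_pow_left₀ (by norm_num) hbR
  have hsmall : |t - (a:ℝ)/b| < min (|t|/2) (1/2) := by
    have h1 : (1:ℝ)/(b:ℝ)^m ≤ 1/2^k := by
      apply one_div_le_one_div_of_le (by positivity) hpow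
    have h2 : (1:ℝ)/2^k < |t|/2 := by
      rw [div_lt_div_iff₀ (by positivity) (by norm_num)]
      have := lt_of_le_of_lt (le_max_right 2 (2/|t|)) hk
      rw [div_lt_iff₀ htpos] at this
      nlinarith
    have h3 : (1:ℝ)/2^k < 1/2 := by
      have := lt_of_le_of_lt (le_max_left 2 (2/|t|)) hk
      rw [div_lt_div_iff₀ (by positivity) (by norm_num)]
      linarith
    have := hlt.trans_le h1
    exact lt_min (this.trans h2) (this.trans h3)
  set s : ℝ := (a:ℝ)/b with hsdef
  clear_value s
  have hslb : |t| / 2 < |s| := by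
    have h1 : |t| - |s| ≤ |t - s| := by
      have := abs_sub_abs_le_abs_sub t s
      linarith [this]
    have h2 : |t - s| < |t|/2 := (hsmall.trans_le (min_le_left _ _))
    linarith
  have hs0 : s ≠ 0 := by
    intro h0
    rw [h0, abs_zero] at hslb
    linarith
  have ha0 : a ≠ 0 := by
    intro h0
    apply hs0
    simp [hsdef, h0]
  have hsub : |s| ≤ |t| + 1 := by
    have h2 : |t - s| < 1 := (hsmall.trans_le (min_le_right _ _)).trans (by norm_num)
    have := abs_sub_abs_le_abs_sub s t
    rw [abs_sub_comm] at this
    linarith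
  have haR : ((a:ℝ)) ≠ 0 := Int.cast_ne_zero.mpr ha0
  have ha1 : (1:ℤ) ≤ |a| := Int.one_le_abs ha0
  set P : ℤ := if 0 < a then a^2 - b^2 else b^2 - a^2 with hPdef
  set Q : ℤ := 2 * |a| * b with hQdef
  clear_value P Q
  have hqval : ((Q:ℤ):ℝ) = 2 * |(a:ℝ)| * b := by
    rw [hQdef]; push_cast; simp
  have hQ1 : (1:ℤ) < Q := by rw [hQdef]; nlinarith
  have hqposR : (0:ℝ) < (Q:ℝ) := by exact_mod_cast hQ1.trans_le' (by norm_num)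
  refine ⟨P, Q, hQ1, ?_, ?_⟩
  · intro heq
    apply hirr
    refine ⟨(P:ℚ) / (Q:ℚ), ?_⟩
    have : (((P:ℚ) / (Q:ℚ) : ℚ) : ℝ) = (P:ℝ) / (Q:ℝ) := by push_cast; ring
    rw [this, ← heq]
  · have hpq : ((P:ℤ):ℝ) / ((Q:ℤ):ℝ) = (1/2) * (s - 1/s) := by
      rcases lt_or_gt_of_ne ha0 with hneg|hpos
      · rw [hPdef, if_neg (by omega)]
        have habs : |(a:ℝ)| = -(a:ℝ) := abs_of_neg (by exact_mod_cast hneg)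
        rw [hqval, habs, hsdef]
        push_cast
        field_simp
        ring
      · rw [hPdef, if_pos hpos]
        have habs : |(a:ℝ)| = (a:ℝ) := abs_of_pos (by exact_mod_cast hpos)
        rw [hqval, habs, hsdef]
        push_cast
        field_simp
    rw [hpq]
    have hdiff : (1/2) * (t - 1/t) - (1/2) * (s - 1/s) = (t - s) * (1 + 1/(t*s)) / 2 := by
      field_simp
      ring
    rw [hdiff]
    have hfac : |1 + 1/(t*s)| ≤ C := by
      have h1 : |1/(t*s)| = 1/(|t| * |s|) := by
        rw [one_div, abs_inv, abs_mul, one_div]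
      have h2 : 1/(|t| * |s|) ≤ 2 / t^2 := by
        rw [div_le_div_iff₀ (by positivity) (by positivity)]
        have ht2 : |t| * |t| = t^2 := by rw [← sq_abs t]; ring
        nlinarith
      calc |1 + 1/(t*s)| ≤ |(1:ℝ)| + |1/(t*s)| := abs_add_le _ _
        _ = 1 + |1/(t*s)| := by rw [abs_one]
        _ ≤ 1 + 2/t^2 := by rw [h1]; linarith
        _ = C := by rw [hCdef]
    have hCpos : (0:ℝ) < C := lt_of_lt_of_le one_pos hC1
    -- |a| ≤ (|t|+1) * b
    have hA : |(a:ℝ)| ≤ (|t| + 1) * b := by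
      have hs_abs : |s| = |(a:ℝ)| / b := by
        rw [hsdef, abs_div, abs_of_pos hbpos]
      rw [hs_abs, div_le_iff₀ hbpos] at hsub
      linarith
    have hq_le : (Q:ℝ) ≤ K * (b:ℝ)^2 := by
      rw [hqval, hKdef]; nlinarith
    have hqn : (Q:ℝ)^n ≤ K^n * (b:ℝ)^(2*n) := by
      calc (Q:ℝ)^n ≤ (K * (b:ℝ)^2)^n := pow_le_pow_left₀ hqposR.le hq_le n
        _ = K^n * (b:ℝ)^(2*n) := by rw [mul_pow, ← pow_mul]
    have hkey : C * (Q:ℝ)^n < (b:ℝ)^m := by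
      have h1 : C * (Q:ℝ)^n ≤ (C * K^n) * (b:ℝ)^(2*n) := by
        have := mul_le_mul_of_nonneg_left hqn hCpos.le
        linarith [this]
      have h3 : (C * K^n) * (b:ℝ)^(2*n) < 2^j * (b:ℝ)^(2*n) :=
        mul_lt_mul_of_pos_right hj (by positivity)
      have h4 : (2:ℝ)^j * (b:ℝ)^(2*n) ≤ (b:ℝ)^m := by
        calc (2:ℝ)^j * (b:ℝ)^(2*n)
            ≤ (b:ℝ)^j * (b:ℝ)^(2*n) := by
              apply mul_le_mul_of_nonneg_right (pow_le_pow_left₀ (by norm_num) hbR j)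
                (by positivity)
          _ = (b:ℝ)^(2*n + j) := by rw [← pow_add]; ring_nf
          _ ≤ (b:ℝ)^m := pow_le_pow_right₀ (by linarith) (by omega)
      linarith
    -- assemble
    have step1 : |(t - s) * (1 + 1/(t*s)) / 2| ≤ |t - s| * C := by
      rw [abs_div, abs_mul]
      have h2 : |(2:ℝ)| = 2 := by norm_num
      rw [h2]
      have : |t - s| * |1 + 1/(t*s)| ≤ |t - s| * C :=
        mul_le_mul_of_nonneg_left hfac (abs_nonneg _)
      nlinarith [abs_nonneg (t - s), abs_nonneg (1 + 1/(t*s))]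
    have step2 : |t - s| * C < (1/(b:ℝ)^m) * C :=
      mul_lt_mul_of_pos_right hlt hCpos
    have step3 : (1/(b:ℝ)^m) * C < 1 / (Q:ℝ)^n := by
      rw [one_div_mul_eq_div, div_lt_div_iff₀ (by positivity) (by positivity)]
      linarith [hkey]
    calc |(t - s) * (1 + 1/(t*s)) / 2| ≤ |t - s| * C := step1
      _ < (1/(b:ℝ)^m) * C := step2
      _ < 1 / (Q:ℝ)^n := step3
end
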